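/- arXiv:1007.2159 — 3 statements merged into one kernel-verified Lean document; each statement's English description precedes it below -/
import Mathlib

section
/- Let p be a prime, q = p^n, G = SL_2(F_q), V = (F_q)^2 the standard module, and T a Sylow p-subgroup of G. Then the set of g ∈ G fixing every element of C_V(T) is exactly T, i.e. C_G(C_V(T)) = T. -/
/-- The natural action of `SL₂(F)` on the standard module `F²`, by matrix-vector
multiplication. -/
instance sl2StdAction {m : Type*} [Fintype m] [DecidableEq m] {F : Type*} [CommRing F] :
    DistribMulAction (Matrix.SpecialLinearGroup m F) (m → F) where
  smul g v := (g : Matrix m m F).mulVec v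
  one_smul v := show ((1 : Matrix.SpecialLinearGroup m F) : Matrix m m F).mulVec v = v by
    simp [Matrix.one_mulVec]
  mul_smul g h v := show ((g * h : Matrix.SpecialLinearGroup m F) : Matrix m m F).mulVec v =
      (g : Matrix m m F).mulVec ((h : Matrix m m F).mulVec v) by
    simp [Matrix.mulVec_mulVec]
  smul_zero g := Matrix.mulVec_zero _
  smul_add g v w := Matrix.mulVec_add _ _ _

theorem sl2_smul_def {m : Type*} [Fintype m] [DecidableEq m] {F : Type*} [CommRing F]
    (g : Matrix.SpecialLinearGroup m F) (v : m → F) :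
    g • v = (g : Matrix m m F).mulVec v := rfl

/-- The fixed points `C_V(A)` of a subgroup `A` acting on `V`, as an additive subgroup. -/
def fixedBySub (G : Type*) [Group G] (V : Type*) [AddCommGroup V] [DistribMulAction G V]
    (A : Subgroup G) : AddSubgroup V where
  carrier := {v | ∀ a ∈ A, a • v = v}
  zero_mem' := fun a _ => smul_zero a
  add_mem' := by
    intro x y hx hy a ha
    rw [smul_add, hx a ha, hy a ha]
  neg_mem' := by
    intro x hx a ha
    rw [smul_neg, hx a ha]

/-- The kernel `C_G(V)` of an action of `G` on `V`. -/
def actionKernel (G : Type*) [Group G] (V : Type*) [AddCommGroup V] [DistribMulAction G V] :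
    Subgroup G where
  carrier := {g | ∀ v : V, g • v = v}
  one_mem' := fun v => one_smul G v
  mul_mem' := by
    intro a b ha hb v
    rw [mul_smul, hb v, ha v]
  inv_mem' := by
    intro a ha v
    nth_rewrite 1 [← ha v]
    rw [inv_smul_smul]

/-- `A ≤ G` is an *offender* on the module `V`: `A/C_A(V)` is a nontrivial elementary abelian
`p`-group and `|V : C_V(A)| ≤ |A : C_A(V)|`. -/
def IsOffenderOn (p : ℕ) (G : Type*) [Group G] (V : Type*) [AddCommGroup V]
    [DistribMulAction G V] (A : Subgroup G) : Prop :=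
  (¬ A ≤ actionKernel G V) ∧
  (∀ a ∈ A, a ^ p ∈ actionKernel G V) ∧
  (∀ a ∈ A, ∀ b ∈ A, a * b * a⁻¹ * b⁻¹ ∈ actionKernel G V) ∧
  (fixedBySub G V A).index ≤ (actionKernel G V).relIndex A

/-- `A ≤ G` is a *best offender* on the module `V`: `A/C_A(V)` is a nontrivial elementary
abelian `p`-group and `|A : C_A(V)|·|C_V(A)| ≥ |B : C_B(V)|·|C_V(B)|` for all `B ≤ A`. -/
def IsBestOffenderOn (p : ℕ) (G : Type*) [Group G] (V : Type*) [AddCommGroup V]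
    [DistribMulAction G V] (A : Subgroup G) : Prop :=
  (¬ A ≤ actionKernel G V) ∧
  (∀ a ∈ A, a ^ p ∈ actionKernel G V) ∧
  (∀ a ∈ A, ∀ b ∈ A, a * b * a⁻¹ * b⁻¹ ∈ actionKernel G V) ∧
  ∀ B : Subgroup G, B ≤ A →
    (actionKernel G V).relIndex B * Nat.card ↥(fixedBySub G V B) ≤
      (actionKernel G V).relIndex A * Nat.card ↥(fixedBySub G V A)


section Aux

private theorem sl2_unipotent_pow_aux {p : ℕ} (hp : p.Prime) {F : Type*} [Field F] [CharP F p]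
    (g : Matrix.SpecialLinearGroup (Fin 2) F) (v : Fin 2 → F) (hv : v ≠ 0)
    (hgv : (g : Matrix (Fin 2) (Fin 2) F).mulVec v = v) : g ^ p = 1 := by
  have : Fact p.Prime := ⟨hp⟩
  set M := (g : Matrix (Fin 2) (Fin 2) F) with hM
  have hdetM : M.det = 1 := g.2
  set A := M - 1 with hA
  have hker : A.mulVec v = 0 := by
    rw [hA, Matrix.sub_mulVec, hgv, Matrix.one_mulVec, sub_self]
  have hdetA : A.det = 0 := (Matrix.exists_mulVec_eq_zero_iff).mp ⟨v, hv, hker⟩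
  have htr : M 0 0 + M 1 1 = 2 := by
    have h1 := Matrix.det_fin_two A
    have h2 := Matrix.det_fin_two M
    simp only [hA, Matrix.sub_apply, Matrix.one_apply] at h1
    rw [hdetA] at h1
    rw [hdetM] at h2
    simp at h1
    linear_combination h1 - h2
  have hA2 : A ^ 2 = 0 := by
    have h1 := Matrix.det_fin_two A
    rw [hdetA] at h1
    have htrA : A 0 0 + A 1 1 = 0 := by
      simp only [hA, Matrix.sub_apply, Matrix.one_apply]
      simp
      linear_combination htr
    ext i j
    rw [pow_two]
    fin_cases i <;> fin_cases j <;>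
      simp only [Matrix.mul_apply, Fin.sum_univ_two, Matrix.zero_apply, Fin.mk_zero, Fin.mk_one]
    · linear_combination h1 + A 0 0 * htrA
    · linear_combination A 0 1 * htrA
    · linear_combination A 1 0 * htrA
    · linear_combination h1 + A 1 1 * htrA
  have hMp : M ^ p = 1 := by
    have hM1 : M = 1 + A := by rw [hA]; abel
    rw [hM1, add_pow_char_of_commute _ (Commute.one_left A), one_pow]
    have hAp : A ^ p = 0 := by
      calc A ^ p = A ^ 2 * A ^ (p - 2) := by
            rw [← pow_add]; congr 1; have := hp.two_le; omega
      _ = 0 := by rw [hA2, zero_mul]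
    rw [hAp, add_zero]
  ext i j
  rw [Matrix.SpecialLinearGroup.coe_pow, hMp]
  simp

end Aux

/-- Let `q = pⁿ`, `G = SL₂(F_q)`, `V = (F_q)²` the standard module and `T`
a Sylow `p`-subgroup of `G`.  Then the set of `g ∈ G` fixing every element of `C_V(T)` is
exactly `T`, i.e. `C_G(C_V(T)) = T`. -/
theorem sl2_centralizer_of_sylow_fixed_points
    {p n : ℕ} (hp : p.Prime) (hn : 0 < n)
    {F : Type*} [Field F] [Fintype F] (hF : Fintype.card F = p ^ n)
    (T : Sylow p (Matrix.SpecialLinearGroup (Fin 2) F)) :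
    {g : Matrix.SpecialLinearGroup (Fin 2) F |
        ∀ v ∈ fixedBySub (Matrix.SpecialLinearGroup (Fin 2) F) (Fin 2 → F)
          (T : Subgroup (Matrix.SpecialLinearGroup (Fin 2) F)), g • v = v} =
      ((T : Subgroup (Matrix.SpecialLinearGroup (Fin 2) F)) :
        Set (Matrix.SpecialLinearGroup (Fin 2) F)) := by
  classical
  have hfact : Fact p.Prime := ⟨hp⟩
  have hpF : CharP F p := by
    have h0 : ((p : F)) ^ n = 0 := by
      have h := Nat.cast_card_eq_zero F
      rw [hF] at h
      push_cast at h
      exact h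
    have hp0 : (p : F) = 0 := pow_eq_zero_iff hn.ne' |>.mp h0
    exact (CharP.charP_iff_prime_eq_zero hp).2 hp0
  set G := Matrix.SpecialLinearGroup (Fin 2) F
  set V := Fin 2 → F
  -- a nonzero vector fixed by all of `T`
  have hmod := (T.2).card_modEq_card_fixedPoints V
  have hdvdV : p ∣ Nat.card V := by
    rw [Nat.card_eq_fintype_card, Fintype.card_fun, hF]
    exact dvd_pow (dvd_pow_self p hn.ne') (by simp)
  have hdvdF : p ∣ Nat.card (MulAction.fixedPoints (↑(T : Subgroup G)) V) := by
    have h := (Nat.modEq_zero_iff_dvd.mpr hdvdV).symm.trans hmod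
    exact Nat.modEq_zero_iff_dvd.mp h.symm
  have h0mem : (0 : V) ∈ MulAction.fixedPoints (↑(T : Subgroup G)) V := fun t => smul_zero t
  have hnt : Nontrivial (MulAction.fixedPoints (↑(T : Subgroup G)) V) := by
    rw [← Finite.one_lt_card_iff_nontrivial]
    have hpos : 0 < Nat.card (MulAction.fixedPoints (↑(T : Subgroup G)) V) :=
      Nat.card_pos_iff.mpr ⟨⟨⟨0, h0mem⟩⟩, Set.Finite.to_subtype (Set.toFinite _)⟩
    have := hp.two_le
    rcases hdvdF with ⟨k, hk⟩
    rcases Nat.eq_zero_or_pos k with rfl | hk1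
    · omega
    · nlinarith
  obtain ⟨⟨v, hvfix⟩, hvne⟩ :=
    exists_ne (⟨0, h0mem⟩ : MulAction.fixedPoints (↑(T : Subgroup G)) V)
  have hv0 : v ≠ 0 := fun h => hvne (Subtype.ext h)
  have hvmem : v ∈ fixedBySub G V (T : Subgroup G) := fun a ha => hvfix ⟨a, ha⟩
  -- the pointwise stabilizer of `C_V(T)` as a subgroup
  let C : Subgroup G :=
    { carrier := {g : G | ∀ w ∈ fixedBySub G V (T : Subgroup G), g • w = w}
      one_mem' := fun w _ => one_smul _ _
      mul_mem' := fun {a b} ha hb w hw => by rw [mul_smul, hb w hw, ha w hw]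
      inv_mem' := fun {a} ha w hw => by
        nth_rewrite 1 [← ha w hw]
        rw [inv_smul_smul] }
  have hCp : IsPGroup p C := by
    rintro ⟨g, hg⟩
    refine ⟨1, ?_⟩
    have hgv : (g : Matrix (Fin 2) (Fin 2) F).mulVec v = v := by
      rw [← sl2_smul_def]
      exact hg v hvmem
    have hgp : g ^ p = 1 := sl2_unipotent_pow_aux hp g v hv0 hgv
    rw [pow_one]
    exact Subtype.ext (by simp [hgp])
  have hTC : (T : Subgroup G) ≤ C := fun t ht w hw => hw t ht
  have hEq : C = (T : Subgroup G) := T.3 hCp hTC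
  show {g : G | ∀ w ∈ fixedBySub G V (T : Subgroup G), g • w = w} = _
  have hset : {g : G | ∀ w ∈ fixedBySub G V (T : Subgroup G), g • w = w} = (C : Set G) := rfl
  rw [hset, hEq]
end

section
/- Let p be a prime, q = p^n, and let G be a finite group isomorphic to SL_2(F_q). Let V be a finite module over F_p for G such that the quotient module V/C_V(G) is a natural SL_2(q)-module for G. Let A ≤ G be an offender on V. Then: (a) |V : C_V(A)| = |A| = q and C_V(A) = C_V(a) for every a ∈ A with a ≠ 1; (b) [V,A,A] = 0, i.e. A acts quadratically on V. -/
section SL2Aux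

open Matrix

variable {F : Type} [Field F]


lemma matrix_ext_mulVec {N M : Matrix (Fin 2) (Fin 2) F}
    (h : ∀ v, N.mulVec v = M.mulVec v) : N = M := by
  ext i j
  have := congrFun (h (Pi.single j 1)) i
  simpa [Matrix.mulVec_single] using this

lemma cayley2 (N : Matrix (Fin 2) (Fin 2) F) :
    N * N = (Matrix.trace N) • N - (N.det) • 1 := by
  ext i j
  fin_cases i <;> fin_cases j <;>
    simp [Matrix.mul_apply, Fin.sum_univ_two, Matrix.trace_fin_two, Matrix.det_fin_two,
      Matrix.one_apply] <;> ring

lemma pow_succ_eq (N : Matrix (Fin 2) (Fin 2) F) (t : F) (h : N * N = t • N) :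
    ∀ k, N ^ (k + 1) = t ^ k • N := by
  intro k
  induction k with
  | zero => simp
  | succ k ih =>
    rw [pow_succ, ih, Algebra.smul_mul_assoc, h, smul_smul, pow_succ]

lemma sq_zero_of_pow {p : ℕ} (hp : p.Prime) (N : Matrix (Fin 2) (Fin 2) F)
    (h : N ^ p = 0) : N * N = 0 := by
  rcases eq_or_ne N 0 with rfl | hN
  · simp
  have hdet : N.det = 0 := by
    have hd : N.det ^ p = 0 := by rw [← Matrix.det_pow, h]; simp
    exact pow_eq_zero_iff hp.ne_zero |>.mp hd
  have hch : N * N = (Matrix.trace N) • N := by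
    rw [cayley2, hdet]; simp
  have hpow := pow_succ_eq N (Matrix.trace N) hch (p - 1)
  have hp1 : p - 1 + 1 = p := by have := hp.one_lt; omega
  rw [hp1, h] at hpow
  have ht : Matrix.trace N ^ (p - 1) = 0 := by
    by_contra ht
    exact hN (by rwa [eq_comm, smul_eq_zero_iff_right ht] at hpow)
  have h1lt := hp.one_lt
  have htr : Matrix.trace N = 0 := pow_eq_zero_iff (by omega : p - 1 ≠ 0) |>.mp ht
  rw [hch, htr, zero_smul]

lemma unipotent_sq {p : ℕ} (hp : p.Prime) [CharP F p] (M : Matrix (Fin 2) (Fin 2) F)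
    (h : M ^ p = 1) : (M - 1) * (M - 1) = 0 := by
  haveI : Fact p.Prime := ⟨hp⟩
  apply sq_zero_of_pow hp
  have : (M - 1) ^ p = M ^ p - 1 ^ p := sub_pow_char_of_commute p (Commute.one_right M)
  rw [this, h, one_pow, sub_self]

lemma scalar_of_commute_sq_zero (N N' : Matrix (Fin 2) (Fin 2) F)
    (hN : N * N = 0) (hN' : N' * N' = 0) (hc : N * N' = N' * N) (h0 : N ≠ 0) :
    ∃ c : F, N' = c • N := by
  have hex : ∃ v, N.mulVec v ≠ 0 := by
    by_contra hv
    push_neg at hv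
    exact h0 (matrix_ext_mulVec (by simp [hv]))
  obtain ⟨v, hv⟩ := hex
  have hNNv : N.mulVec (N.mulVec v) = 0 := by
    rw [Matrix.mulVec_mulVec, hN, Matrix.zero_mulVec]
  have li : LinearIndependent F ![v, N.mulVec v] := by
    rw [LinearIndependent.pair_iff]
    intro s t hst
    have h1 : N.mulVec (s • v + t • N.mulVec v) = 0 := by rw [hst, Matrix.mulVec_zero]
    rw [Matrix.mulVec_add, Matrix.mulVec_smul, Matrix.mulVec_smul, hNNv, smul_zero,
      add_zero] at h1
    have hs : s = 0 := by
      rcases smul_eq_zero.mp h1 with h | h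
      · exact h
      · exact absurd h hv
    subst hs
    rw [zero_smul, zero_add] at hst
    rcases smul_eq_zero.mp hst with h | h
    · exact ⟨rfl, h⟩
    · exact absurd h hv
  have hspan : Submodule.span F {v, N.mulVec v} = ⊤ := by
    have hr : Set.range ![v, N.mulVec v] = {v, N.mulVec v} := by
      ext x
      simp [Set.pair_comm]
    apply Submodule.eq_top_of_finrank_eq
    rw [← hr, finrank_span_eq_card li]
    simp
  obtain ⟨α, β, hab⟩ := Submodule.mem_span_pair.mp
    (by rw [hspan]; trivial : N'.mulVec v ∈ Submodule.span F {v, N.mulVec v})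
  have hab' : N'.mulVec v = α • v + β • N.mulVec v := hab.symm
  have hN'Nv : N'.mulVec (N.mulVec v) = α • N.mulVec v := by
    rw [Matrix.mulVec_mulVec, ← hc, ← Matrix.mulVec_mulVec, hab', Matrix.mulVec_add,
      Matrix.mulVec_smul, Matrix.mulVec_smul, hNNv, smul_zero, add_zero]
  have h2 : N'.mulVec (α • v + β • N.mulVec v)
      = α • (α • v + β • N.mulVec v) + β • (α • N.mulVec v) := by
    rw [Matrix.mulVec_add, Matrix.mulVec_smul, Matrix.mulVec_smul, hN'Nv, hab']
  have h3 : N'.mulVec (α • v + β • N.mulVec v) = 0 := by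
    rw [← hab', Matrix.mulVec_mulVec, hN', Matrix.zero_mulVec]
  have h4 : α • (α • v + β • N.mulVec v) + β • (α • N.mulVec v) = 0 := by rw [← h2, h3]
  have hzero : (α * α) • v + (α * β + β * α) • N.mulVec v = 0 := by
    rw [← h4]; module
  have hα : α = 0 := mul_self_eq_zero.mp (LinearIndependent.pair_iff.mp li _ _ hzero).1
  subst hα
  rw [zero_smul, zero_add] at hab'
  rw [zero_smul] at hN'Nv
  refine ⟨β, matrix_ext_mulVec fun x => ?_⟩
  have hx : x ∈ Submodule.span F {v, N.mulVec v} := by rw [hspan]; trivial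
  obtain ⟨s, t, hst⟩ := Submodule.mem_span_pair.mp hx
  rw [← hst, Matrix.mulVec_add, Matrix.mulVec_add, Matrix.mulVec_smul, Matrix.mulVec_smul,
    Matrix.mulVec_smul, Matrix.mulVec_smul, hab', hN'Nv, Matrix.smul_mulVec,
    Matrix.smul_mulVec, hNNv]
  module

lemma card_ker_eq [Fintype F] (N : Matrix (Fin 2) (Fin 2) F)
    (h2 : N * N = 0) (h0 : N ≠ 0) :
    Nat.card (LinearMap.ker N.mulVecLin) = Fintype.card F := by
  set f := N.mulVecLin with hf
  have hfne : f ≠ 0 := by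
    intro h
    apply h0
    apply matrix_ext_mulVec
    intro x
    have := congrFun (congrArg DFunLike.coe h) x
    simpa [hf, Matrix.mulVecLin_apply] using this
  have hrk : LinearMap.range f ≤ LinearMap.ker f := by
    rw [LinearMap.range_le_ker_iff]
    rw [hf, ← Matrix.mulVecLin_mul, h2]
    exact Matrix.mulVecLin_zero
  have hsum : Module.finrank F (LinearMap.range f) + Module.finrank F (LinearMap.ker f) = 2 := by
    rw [LinearMap.finrank_range_add_finrank_ker]
    simp
  have hrle : Module.finrank F (LinearMap.range f) ≤ Module.finrank F (LinearMap.ker f) :=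
    Submodule.finrank_mono hrk
  have hrpos : Module.finrank F (LinearMap.range f) ≠ 0 := by
    intro h
    rw [Submodule.finrank_eq_zero] at h
    exact hfne (LinearMap.range_eq_bot.mp h)
  have hk1 : Module.finrank F (LinearMap.ker f) = 1 := by omega
  haveI : Fintype ↥(LinearMap.ker f) := Fintype.ofFinite _
  rw [Nat.card_eq_fintype_card, Module.card_eq_pow_finrank (K := F), hk1, pow_one]

lemma charP_of_card {F : Type} [Field F] [Fintype F] {p n : ℕ} (hp : p.Prime) (hn : 0 < n)
    (hF : Fintype.card F = p ^ n) : CharP F p := by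
  obtain ⟨m, hr, hcard⟩ := FiniteField.card F (ringChar F)
  have hdvd : p ∣ ringChar F := by
    refine hp.dvd_of_dvd_pow (n := (m : ℕ)) ?_
    rw [← hcard, hF]
    exact dvd_pow_self p hn.ne'
  have : p = ringChar F := (Nat.prime_dvd_prime_iff_eq hp hr).mp hdvd
  exact this ▸ inferInstanceAs (CharP F (ringChar F))


end SL2Aux

/-- Let `q = pⁿ` and let `G` be a finite group isomorphic to `SL₂(F_q)`.
Let `V` be a finite `F_p`-module for `G` such that `V/C_V(G)` is a natural `SL₂(q)`-module
for `G` (witnessed by a group isomorphism `φ : G ≃* SL₂(F)` and a surjective additive map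
`ψ : V → F²` with kernel `C_V(G)`, equivariant for the actions).  Let `A ≤ G` be an offender
on `V`.  Then (a) `|V : C_V(A)| = |A| = q` and `C_V(A) = C_V(a)` for every `1 ≠ a ∈ A`;
(b) `[V, A, A] = 0`, i.e. `A` acts quadratically on `V`. -/
theorem offender_on_quotient_natural_sl2_module
    {p n : ℕ} (hp : p.Prime) (hn : 0 < n)
    {F : Type} [Field F] [Fintype F] (hF : Fintype.card F = p ^ n)
    {G : Type*} [Group G] [Finite G]
    {V : Type*} [AddCommGroup V] [Finite V] [Module (ZMod p) V] [DistribMulAction G V]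
    (φ : G ≃* Matrix.SpecialLinearGroup (Fin 2) F)
    (ψ : V →+ (Fin 2 → F)) (hψsurj : Function.Surjective ψ)
    (hψker : ∀ v : V, ψ v = 0 ↔ ∀ g : G, g • v = v)
    (hcompat : ∀ (g : G) (v : V), ψ (g • v) = (φ g : Matrix (Fin 2) (Fin 2) F).mulVec (ψ v))
    (A : Subgroup G) (hA : IsOffenderOn p G V A) :
    ((fixedBySub G V A).index = Nat.card ↥A ∧ Nat.card ↥A = p ^ n ∧
      ∀ a ∈ A, a ≠ 1 → (fixedBySub G V A : Set V) = {v : V | a • v = v}) ∧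
    (∀ a ∈ A, ∀ w ∈ AddSubgroup.closure {w : V | ∃ b ∈ A, ∃ v : V, w = b • v - v},
      a • w = w) := by
  classical
  haveI : Fact p.Prime := ⟨hp⟩
  haveI hch : CharP F p := charP_of_card hp hn hF
  obtain ⟨hA1, hA2, hA3, hA4⟩ := hA
  have hker : actionKernel G V = ⊥ := by
    rw [eq_bot_iff]
    intro g hg
    have hφ : (φ g : Matrix (Fin 2) (Fin 2) F) = 1 := by
      apply matrix_ext_mulVec
      intro w
      obtain ⟨v, rfl⟩ := hψsurj w
      rw [← hcompat g v, hg v, Matrix.one_mulVec]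
    have h1 : φ g = 1 := Subtype.ext (by simpa using hφ)
    have hg1 : g = 1 := by
      apply φ.injective
      rw [h1, map_one]
    simp [hg1, Subgroup.mem_bot]
  rw [hker] at hA1 hA2 hA3 hA4
  rw [Subgroup.relIndex_bot_left] at hA4
  have hpow1 : ∀ a ∈ A, a ^ p = 1 := fun a ha => Subgroup.mem_bot.mp (hA2 a ha)
  have hcommG : ∀ a ∈ A, ∀ b ∈ A, a * b = b * a := fun a ha b hb =>
    commutatorElement_eq_one_iff_mul_comm.mp (Subgroup.mem_bot.mp (hA3 a ha b hb))
  set Nm : G → Matrix (Fin 2) (Fin 2) F :=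
    fun a => (φ a : Matrix (Fin 2) (Fin 2) F) - 1 with hNm
  have hNsq : ∀ a ∈ A, Nm a * Nm a = 0 := by
    intro a ha
    apply unipotent_sq hp
    rw [← Matrix.SpecialLinearGroup.coe_pow, ← map_pow, hpow1 a ha, map_one,
      Matrix.SpecialLinearGroup.coe_one]
  have hMcomm : ∀ a ∈ A, ∀ b ∈ A, Nm a * Nm b = Nm b * Nm a := by
    intro a ha b hb
    have h : (φ a : Matrix (Fin 2) (Fin 2) F) * (φ b) = (φ b) * (φ a) := by
      rw [← Matrix.SpecialLinearGroup.coe_mul, ← map_mul, hcommG a ha b hb, map_mul,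
        Matrix.SpecialLinearGroup.coe_mul]
    have e : ∀ X Y : Matrix (Fin 2) (Fin 2) F, (X - 1) * (Y - 1) = X * Y - X - Y + 1 := by
      intros; noncomm_ring
    simp only [hNm]
    rw [e, e, h]
    abel
  obtain ⟨a₀, ha₀A, ha₀⟩ : ∃ a ∈ A, a ≠ 1 := by
    by_contra h
    push_neg at h
    exact hA1 (fun x hx => Subgroup.mem_bot.mpr (h x hx))
  have hNm_ne : ∀ a ∈ A, a ≠ 1 → Nm a ≠ 0 := by
    intro a ha h1 hcon
    apply h1
    apply φ.injective
    rw [map_one]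
    apply Subtype.ext
    have : (φ a : Matrix (Fin 2) (Fin 2) F) = 1 := by
      have := sub_eq_zero.mp hcon
      simpa using this
    simpa using this
  have hscalar : ∀ a ∈ A, ∃ c : F, Nm a = c • Nm a₀ := fun a ha =>
    scalar_of_commute_sq_zero (Nm a₀) (Nm a) (hNsq a₀ ha₀A) (hNsq a ha)
      (hMcomm a₀ ha₀A a ha) (hNm_ne a₀ ha₀A ha₀)
  have hAq : Nat.card ↥A ≤ p ^ n := by
    have hinj : Function.Injective (fun a : ↥A => Classical.choose (hscalar a a.2)) := by
      intro a b h
      have h1 := Classical.choose_spec (hscalar a a.2)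
      have h2 := Classical.choose_spec (hscalar b b.2)
      have h' : Classical.choose (hscalar a a.2) = Classical.choose (hscalar b b.2) := h
      have hNab : Nm (a : G) = Nm (b : G) := by
        rw [h1, h2, h']
      have hφab : (φ (a : G) : Matrix (Fin 2) (Fin 2) F) = (φ (b : G)) := by
        have := hNab
        simp only [hNm] at this
        exact sub_left_inj.mp this
      exact Subtype.ext (φ.injective (Subtype.ext hφab))
    calc Nat.card ↥A ≤ Nat.card F := Nat.card_le_card_of_injective _ hinj
      _ = p ^ n := by rw [Nat.card_eq_fintype_card, hF]
  set Ka : G → AddSubgroup V := fun a =>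
    AddSubgroup.comap ψ ((LinearMap.ker (Nm a).mulVecLin).toAddSubgroup) with hKa
  have hKa_mem : ∀ (a : G) (v : V), v ∈ Ka a ↔ (Nm a).mulVec (ψ v) = 0 := by
    intro a v
    simp [hKa, AddSubgroup.mem_comap, Submodule.mem_toAddSubgroup, LinearMap.mem_ker,
      Matrix.mulVecLin_apply]
  have hW : Nat.card (Fin 2 → F) = p ^ n * p ^ n := by
    rw [Nat.card_fun]
    simp [Nat.card_eq_fintype_card, hF]
    ring
  have hKaidx : ∀ a ∈ A, a ≠ 1 → (Ka a).index = p ^ n := by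
    intro a ha h1
    have hcomap : (Ka a).index = ((LinearMap.ker (Nm a).mulVecLin).toAddSubgroup).index :=
      AddSubgroup.index_comap_of_surjective _ hψsurj
    have hcard : Nat.card ((LinearMap.ker (Nm a).mulVecLin).toAddSubgroup) = p ^ n := by
      rw [show Nat.card ((LinearMap.ker (Nm a).mulVecLin).toAddSubgroup)
          = Nat.card (LinearMap.ker (Nm a).mulVecLin) from rfl]
      rw [card_ker_eq (Nm a) (hNsq a ha) (hNm_ne a ha h1), hF]
    have hmul := AddSubgroup.card_mul_index ((LinearMap.ker (Nm a).mulVecLin).toAddSubgroup)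
    rw [hcard, hW] at hmul
    have hpn : 0 < p ^ n := pow_pos hp.pos n
    rw [hcomap]
    exact Nat.eq_of_mul_eq_mul_left hpn hmul
  have hCleKa : ∀ a ∈ A, fixedBySub G V A ≤ Ka a := by
    intro a ha v hv
    rw [hKa_mem]
    have hveq : (φ a : Matrix (Fin 2) (Fin 2) F).mulVec (ψ v) = ψ v := by
      rw [← hcompat, hv a ha]
    simp only [hNm]
    rw [Matrix.sub_mulVec, Matrix.one_mulVec, hveq, sub_self]
  set C := fixedBySub G V A with hC
  have hCidx_ne : C.index ≠ 0 := AddSubgroup.index_ne_zero_of_finite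
  have hq_le : p ^ n ≤ C.index := by
    have hd := AddSubgroup.index_dvd_of_le (hCleKa a₀ ha₀A)
    rw [hKaidx a₀ ha₀A ha₀] at hd
    exact Nat.le_of_dvd (Nat.pos_of_ne_zero hCidx_ne) hd
  have hCidx : C.index = p ^ n := le_antisymm (hA4.trans hAq) hq_le
  have hAcard : Nat.card ↥A = p ^ n := le_antisymm hAq (hq_le.trans hA4)
  have hCKa : ∀ a ∈ A, a ≠ 1 → (C : Set V) = (Ka a : Set V) := by
    intro a ha h1
    have hle := hCleKa a ha
    have h2 := AddSubgroup.card_mul_index C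
    have h3 := AddSubgroup.card_mul_index (Ka a)
    rw [hCidx] at h2
    rw [hKaidx a ha h1] at h3
    have hpn : 0 < p ^ n := pow_pos hp.pos n
    have hcards : Nat.card ↥(Ka a) ≤ Nat.card ↥C :=
      le_of_eq (Nat.eq_of_mul_eq_mul_right hpn (h3.trans h2.symm))
    apply Set.eq_of_subset_of_ncard_le (SetLike.coe_subset_coe.mpr hle) ?_ (Set.toFinite _)
    rw [← Nat.card_coe_set_eq, ← Nat.card_coe_set_eq]
    exact hcards
  have ha3 : ∀ a ∈ A, a ≠ 1 → (C : Set V) = {v : V | a • v = v} := by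
    intro a ha h1
    apply subset_antisymm
    · intro v hv
      exact hv a ha
    · intro v hv
      have hmem : v ∈ Ka a := by
        rw [hKa_mem]
        have hveq : (φ a : Matrix (Fin 2) (Fin 2) F).mulVec (ψ v) = ψ v := by
          rw [← hcompat, hv]
        simp only [hNm]
        rw [Matrix.sub_mulVec, Matrix.one_mulVec, hveq, sub_self]
      rw [hCKa a ha h1]
      exact hmem
  refine ⟨⟨hCidx.trans hAcard.symm, hAcard, ha3⟩, ?_⟩
  intro a ha w hw
  suffices hsub : AddSubgroup.closure {w : V | ∃ b ∈ A, ∃ v : V, w = b • v - v} ≤ C by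
    exact hsub hw a ha
  rw [AddSubgroup.closure_le]
  rintro w ⟨b, hb, v, rfl⟩
  show (b • v - v) ∈ (C : Set V)
  rw [hCKa a₀ ha₀A ha₀, SetLike.mem_coe, hKa_mem]
  have hψw : ψ (b • v - v) = (Nm b).mulVec (ψ v) := by
    rw [map_sub, hcompat]
    simp only [hNm]
    rw [Matrix.sub_mulVec, Matrix.one_mulVec]
  rw [hψw, Matrix.mulVec_mulVec]
  obtain ⟨c, hc⟩ := hscalar b hb
  rw [hc, mul_smul_comm, hNsq a₀ ha₀A, smul_zero, Matrix.zero_mulVec]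
end

section
/- Let p be a prime, q = p^n, and let G be a finite group acting faithfully on a finite F_p-module V (i.e. C_G(V) = 1). Let H be a normal subgroup of G such that V, with the restricted action, is a natural SL_2(q)-module for H, and let T be a Sylow p-subgroup of G with C_T(H) ≤ H. Then C_T(C_V(T ∩ H)) ≤ H, where C_V(T ∩ H) is the set of vectors fixed by T ∩ H and C_T(X) = {t ∈ T : t·v = v for all v ∈ X}. -/
lemma mem_fixedBySub {G : Type*} [Group G] {V : Type*} [AddCommGroup V] [DistribMulAction G V]
    {A : Subgroup G} {v : V} : v ∈ fixedBySub G V A ↔ ∀ a ∈ A, a • v = v := Iff.rfl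

/-- Elementary Schur lemma for the natural `SL₂` module: an additive map commuting with all
`det = 1` matrices is a scalar. -/
lemma schur_sl2 {F : Type} [Field F] (ε : (Fin 2 → F) → (Fin 2 → F))
    (hadd : ∀ u w, ε (u + w) = ε u + ε w)
    (hcomm : ∀ M : Matrix (Fin 2) (Fin 2) F, M.det = 1 →
      ∀ u, ε (M.mulVec u) = M.mulVec (ε u)) :
    ∀ u, ε u = ε ![0, 1] 1 • u := by
  have hzero : ε 0 = 0 := by
    have h := hadd 0 0
    rw [add_zero] at h
    exact (add_eq_right.mp h.symm)
  have hsub : ∀ u w, ε (u - w) = ε u - ε w := by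
    intro u w
    have h := hadd (u - w) w
    rw [sub_add_cancel] at h
    rw [eq_sub_iff_add_eq, ← h]
  have e1 : ∀ a : F, ε ![a, 1] = ![ε ![0,1] 0 + a * ε ![0,1] 1, ε ![0,1] 1] := by
    intro a
    have hd : (!![1, a; 0, 1] : Matrix (Fin 2) (Fin 2) F).det = 1 := by
      simp [Matrix.det_fin_two_of]
    have h := hcomm _ hd ![0, 1]
    have h0 : (!![1, a; 0, 1] : Matrix (Fin 2) (Fin 2) F).mulVec ![0, 1] = ![a, 1] := by
      funext i
      fin_cases i <;>
        simp [Matrix.mulVec, dotProduct, Fin.sum_univ_two]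
    rw [h0] at h
    rw [h]
    funext i
    fin_cases i <;>
      simp [Matrix.mulVec, dotProduct, Fin.sum_univ_two]
  have e2 : ∀ a : F, ε ![a, 0] = ![a * ε ![0,1] 1, 0] := by
    intro a
    have harg : (![a, 1] : Fin 2 → F) - ![0, 1] = ![a, 0] := by
      funext i; fin_cases i <;> simp
    rw [← harg, hsub, e1]
    funext i
    fin_cases i <;> simp
  have e3 : ∀ c : F, ε ![0, c] = ![0, c * ε ![0,1] 1] := by
    intro c
    have hd : (!![0, -1; 1, 0] : Matrix (Fin 2) (Fin 2) F).det = 1 := by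
      simp [Matrix.det_fin_two_of]
    have h := hcomm _ hd ![c, 0]
    have h0 : (!![0, -1; 1, 0] : Matrix (Fin 2) (Fin 2) F).mulVec ![c, 0] = ![0, c] := by
      funext i
      fin_cases i <;>
        simp [Matrix.mulVec, dotProduct, Fin.sum_univ_two]
    rw [h0] at h
    rw [h, e2]
    funext i
    fin_cases i <;>
      simp [Matrix.mulVec, dotProduct, Fin.sum_univ_two]
  intro u
  have harg : u = ![u 0, 0] + ![0, u 1] := by
    funext i; fin_cases i <;> simp
  have hsplit : ε u = ε ![u 0, 0] + ε ![0, u 1] := by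
    conv_lhs => rw [harg]
    exact hadd _ _
  rw [hsplit, e2 (u 0), e3 (u 1)]
  funext i
  fin_cases i <;> simp [mul_comm]

/-- Let `q = pⁿ` and let `G` be a finite group acting faithfully on a finite
`F_p`-module `V`.  Let `H ⊴ G` be a normal subgroup such that `V`, with the restricted action,
is a natural `SL₂(q)`-module for `H`, and let `T` be a Sylow `p`-subgroup of `G` with
`C_T(H) ≤ H`.  Then `C_T(C_V(T ∩ H)) ≤ H`. -/
theorem centralizer_of_fixed_points_le_of_natural_module
    {p n : ℕ} (hp : p.Prime) (hn : 0 < n)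
    {F : Type} [Field F] [Fintype F] (hF : Fintype.card F = p ^ n)
    {G : Type*} [Group G] [Finite G]
    {V : Type*} [AddCommGroup V] [Finite V] [Module (ZMod p) V] [DistribMulAction G V]
    (hfaith : ∀ g : G, (∀ v : V, g • v = v) → g = 1)
    (H : Subgroup G) (hH : H.Normal)
    (φ : H ≃* Matrix.SpecialLinearGroup (Fin 2) F)
    (ψ : V ≃+ (Fin 2 → F))
    (hcompat : ∀ (h : H) (v : V),
      ψ ((h : G) • v) = (φ h : Matrix (Fin 2) (Fin 2) F).mulVec (ψ v))
    (T : Sylow p G)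
    (hCT : ∀ t ∈ (T : Subgroup G), (∀ h ∈ H, t * h = h * t) → t ∈ H) :
    ∀ t ∈ (T : Subgroup G),
      (∀ v ∈ fixedBySub G V ((T : Subgroup G) ⊓ H), t • v = v) → t ∈ H := by
  haveI : Fact p.Prime := ⟨hp⟩
  -- the field `F` has characteristic `p`
  haveI hchar : CharP F p := by
    haveI h1 : CharP F (ringChar F) := ringChar.charP F
    have hr : (ringChar F).Prime := CharP.char_is_prime F (ringChar F)
    haveI : Fact (ringChar F).Prime := ⟨hr⟩
    obtain ⟨m, -, hcard⟩ := FiniteField.card F (ringChar F)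
    have hd : p ∣ ringChar F ^ (m : ℕ) := by
      rw [← hcard, hF]
      exact dvd_pow_self p hn.ne'
    have hpq : p = ringChar F := (Nat.prime_dvd_prime_iff_eq hp hr).mp (hp.dvd_of_dvd_pow hd)
    rw [hpq]
    exact h1
  intro t ht hfix
  set S : Subgroup G := (T : Subgroup G) ⊓ H with hS
  -- existence of a nonzero common fixed vector of `S`
  have hSp : IsPGroup p S := T.isPGroup'.to_le inf_le_left
  obtain ⟨v₀, hv₀S, hv₀⟩ : ∃ v₀, v₀ ∈ fixedBySub G V S ∧ v₀ ≠ 0 := by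
    have hmod := hSp.card_modEq_card_fixedPoints V
    by_contra hcon
    push_neg at hcon
    have hFPeq : MulAction.fixedPoints S V = {0} := by
      ext v
      simp only [Set.mem_singleton_iff, MulAction.mem_fixedPoints]
      constructor
      · intro hv
        exact hcon v (fun a ha => hv ⟨a, ha⟩)
      · rintro rfl s
        exact smul_zero _
    have h1 : Nat.card (MulAction.fixedPoints S V) = 1 := by
      rw [hFPeq]
      exact Nat.card_unique
    have hdvd : p ∣ Nat.card V := by
      have hcV : Nat.card V = Fintype.card F ^ 2 := by
        rw [Nat.card_congr ψ.toEquiv, Nat.card_eq_fintype_card]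
        simp [Fintype.card_fun]
      rw [hcV, hF, ← pow_mul]
      exact dvd_pow_self p (by positivity)
    have h2 : (1 : ℕ) ≡ 0 [MOD p] := by
      calc (1 : ℕ) ≡ Nat.card V [MOD p] := by rw [← h1]; exact hmod.symm
        _ ≡ 0 [MOD p] := Nat.modEq_zero_iff_dvd.mpr hdvd
    have h3 : p ∣ 1 := Nat.modEq_zero_iff_dvd.mp h2
    exact absurd (Nat.le_of_dvd one_pos h3) (by have := hp.one_lt; omega)
  have htv₀ : t • v₀ = v₀ := hfix v₀ hv₀S
  have htinv : t⁻¹ • v₀ = v₀ := by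
    conv_lhs => rw [← htv₀]
    rw [inv_smul_smul]
  have hnorm : ∀ g ∈ H, t⁻¹ * g * t ∈ H := by
    intro g hg
    simpa using hH.conj_mem g hg t⁻¹
  have hcompat' : ∀ (h : H) (u : Fin 2 → F),
      (h : G) • (ψ.symm u) = ψ.symm ((φ h : Matrix (Fin 2) (Fin 2) F).mulVec u) := by
    intro h u
    apply ψ.injective
    rw [hcompat, ψ.apply_symm_apply, ψ.apply_symm_apply]
  -- semilinearity of `t` with trivial field twist
  have key : ∀ (lam : F) (v : V),
      t • (ψ.symm (lam • ψ v)) = ψ.symm (lam • ψ (t • v)) := by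
    intro lam
    set ε : (Fin 2 → F) → (Fin 2 → F) :=
      fun u => ψ (t • ψ.symm (lam • ψ (t⁻¹ • ψ.symm u))) with hε
    have hεapp : ∀ u, ε u = ψ (t • ψ.symm (lam • ψ (t⁻¹ • ψ.symm u))) := fun _ => rfl
    have hadd : ∀ u w, ε (u + w) = ε u + ε w := by
      intro u w
      simp only [hεapp, map_add, smul_add]
    have hcomm : ∀ M : Matrix (Fin 2) (Fin 2) F, M.det = 1 →
        ∀ u, ε (M.mulVec u) = M.mulVec (ε u) := by
      intro M hdetM u
      set h : H := φ.symm ⟨M, hdetM⟩ with hhdef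
      have hφh : (φ h : Matrix (Fin 2) (Fin 2) F) = M := by
        rw [hhdef]
        exact congrArg (fun x : Matrix.SpecialLinearGroup (Fin 2) F => (x : Matrix (Fin 2) (Fin 2) F))
          (φ.apply_symm_apply _)
      have hmem : t⁻¹ * (h : G) * t ∈ H := hnorm _ h.2
      set h' : H := ⟨t⁻¹ * (h : G) * t, hmem⟩ with hh'
      have s1 : ψ.symm (M.mulVec u) = (h : G) • ψ.symm u := by
        rw [← hφh]
        exact (hcompat' h u).symm
      have s2 : t⁻¹ * (h : G) = (h' : G) * t⁻¹ := by
        show t⁻¹ * (h : G) = (t⁻¹ * (h : G) * t) * t⁻¹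
        group
      have s4 : ψ.symm ((φ h' : Matrix (Fin 2) (Fin 2) F).mulVec (lam • ψ (t⁻¹ • ψ.symm u)))
          = (h' : G) • ψ.symm (lam • ψ (t⁻¹ • ψ.symm u)) := (hcompat' h' _).symm
      have s5 : t * (h' : G) = (h : G) * t := by
        show t * (t⁻¹ * (h : G) * t) = (h : G) * t
        group
      calc ε (M.mulVec u)
          = ψ (t • ψ.symm (lam • ψ (t⁻¹ • ((h : G) • ψ.symm u)))) := by rw [hεapp, s1]
        _ = ψ (t • ψ.symm (lam • ψ ((h' : G) • (t⁻¹ • ψ.symm u)))) := by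
            rw [← mul_smul, s2, mul_smul]
        _ = ψ (t • ψ.symm ((φ h' : Matrix (Fin 2) (Fin 2) F).mulVec
              (lam • ψ (t⁻¹ • ψ.symm u)))) := by
            rw [hcompat h', ← Matrix.mulVec_smul]
        _ = ψ (t • ((h' : G) • ψ.symm (lam • ψ (t⁻¹ • ψ.symm u)))) := by rw [s4]
        _ = ψ ((h : G) • (t • ψ.symm (lam • ψ (t⁻¹ • ψ.symm u)))) := by
            rw [← mul_smul, s5, mul_smul]
        _ = M.mulVec (ε u) := by rw [hcompat h, hφh, hεapp]
    have hy := schur_sl2 ε hadd hcomm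
    -- the twist is trivial, via the nonzero fixed vector `v₀`
    have hzfix : (ψ.symm (lam • ψ v₀)) ∈ fixedBySub G V S := by
      intro a ha
      have haH : a ∈ H := ha.2
      have h1 : a • ψ.symm (lam • ψ v₀) = ((⟨a, haH⟩ : H) : G) • ψ.symm (lam • ψ v₀) := rfl
      rw [h1, hcompat' ⟨a, haH⟩, Matrix.mulVec_smul, ← hcompat ⟨a, haH⟩ v₀]
      have h2 : ((⟨a, haH⟩ : H) : G) • v₀ = v₀ := hv₀S a ha
      rw [h2]
    have hεv₀ : ε (ψ v₀) = lam • ψ v₀ := by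
      rw [hεapp, ψ.symm_apply_apply, htinv, hfix _ hzfix, ψ.apply_symm_apply]
    have hyl : ε ![0, 1] 1 = lam := by
      have h2 := hy (ψ v₀)
      rw [hεv₀] at h2
      have hne : ψ v₀ ≠ 0 := by
        intro hc
        apply hv₀
        have := congrArg ψ.symm hc
        simpa using this
      obtain ⟨i, hi⟩ := Function.ne_iff.mp hne
      have h3 := congrFun h2 i
      simp only [Pi.smul_apply, smul_eq_mul, Pi.zero_apply] at h3 hi
      exact (mul_right_cancel₀ hi h3).symm
    intro v
    have h3 := hy (ψ (t • v))
    rw [hεapp, ψ.symm_apply_apply, inv_smul_smul, hyl] at h3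
    apply ψ.injective
    rw [ψ.apply_symm_apply]
    exact h3
  -- `t` acts `F`-linearly; build the corresponding matrix
  have hsmul : ∀ (c : F) (u : Fin 2 → F),
      ψ (t • ψ.symm (c • u)) = c • ψ (t • ψ.symm u) := by
    intro c u
    have h := key c (ψ.symm u)
    rw [ψ.apply_symm_apply] at h
    rw [h, ψ.apply_symm_apply]
  have hadd' : ∀ u w : Fin 2 → F,
      ψ (t • ψ.symm (u + w)) = ψ (t • ψ.symm u) + ψ (t • ψ.symm w) := by
    intro u w
    simp only [map_add, smul_add]
  set Mt : Matrix (Fin 2) (Fin 2) F :=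
    Matrix.of fun i j => ψ (t • ψ.symm (Pi.single j 1)) i with hMtdef
  have hMtapp : ∀ i j, Mt i j = ψ (t • ψ.symm (Pi.single j 1)) i := fun _ _ => rfl
  have hMt : ∀ u, Mt.mulVec u = ψ (t • ψ.symm u) := by
    intro u
    have hu : u = u 0 • (Pi.single 0 1 : Fin 2 → F) + u 1 • (Pi.single 1 1 : Fin 2 → F) := by
      funext i
      fin_cases i <;> simp [Pi.single_apply]
    conv_rhs => rw [hu]
    rw [hadd', hsmul, hsmul]
    funext i
    simp only [Matrix.mulVec, dotProduct, Fin.sum_univ_two, hMtapp,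
      Pi.add_apply, Pi.smul_apply, smul_eq_mul]
    ring
  obtain ⟨k, hk⟩ := T.isPGroup' ⟨t, ht⟩
  have htk : t ^ p ^ k = 1 := by
    have := congrArg (Subtype.val) hk
    simpa using this
  have hMpow : ∀ (m : ℕ) (u : Fin 2 → F), (Mt ^ m).mulVec u = ψ (t ^ m • ψ.symm u) := by
    intro m
    induction m with
    | zero =>
      intro u
      simp [Matrix.one_mulVec]
    | succ m ih =>
      intro u
      rw [pow_succ, ← Matrix.mulVec_mulVec, hMt, ih, ψ.symm_apply_apply, pow_succ, mul_smul]
  have hMone : Mt ^ (p ^ k) = 1 := by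
    ext i j
    have h := hMpow (p ^ k) (Pi.single j 1)
    rw [htk, one_smul, ψ.apply_symm_apply, Matrix.mulVec_single] at h
    have h2 := congrFun h i
    simpa [Matrix.one_apply, Pi.single_apply] using h2
  have hdet1 : Mt.det = 1 := by
    have h1 : Mt.det ^ p ^ k = 1 := by
      rw [← Matrix.det_pow, hMone, Matrix.det_one]
    have h2 : (Mt.det - 1) ^ p ^ k = 0 := by
      rw [sub_pow_char_pow, h1, one_pow, sub_self]
    have hk0 : p ^ k ≠ 0 := pow_ne_zero _ hp.pos.ne'
    have h3 : Mt.det - 1 = 0 := pow_eq_zero_iff hk0 |>.mp h2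
    exact sub_eq_zero.mp h3
  set h0 : H := φ.symm ⟨Mt, hdet1⟩ with hh0
  have hact : ∀ v : V, (h0 : G) • v = t • v := by
    intro v
    apply ψ.injective
    rw [hcompat h0 v]
    have hφh0 : (φ h0 : Matrix (Fin 2) (Fin 2) F) = Mt := by
      rw [hh0]
      exact congrArg (fun x : Matrix.SpecialLinearGroup (Fin 2) F => (x : Matrix (Fin 2) (Fin 2) F))
        (φ.apply_symm_apply _)
    rw [hφh0, hMt, ψ.symm_apply_apply]
  have hone : (h0 : G)⁻¹ * t = 1 := by
    apply hfaith
    intro v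
    rw [mul_smul, ← hact v, ← mul_smul, inv_mul_cancel, one_smul]
  have hteq : (h0 : G) = t := inv_mul_eq_one.mp hone
  rw [← hteq]
  exact h0.2
end
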